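/- Let p ∈ [0,1], T ∈ [0,1], S ∈ (0,1]. There exist unit vectors ψ, φ in a finite-dimensional complex Hilbert space and complementary orthogonal projections Π_1, Π_2 (Π_1 + Π_2 = 1) with |⟨φ,ψ⟩|² = T, |⟨φ,Π_1ψ⟩|² + |⟨φ,Π_2ψ⟩|² = S, and |⟨φ,Π_1ψ⟩|² = p·S, if and only if |√p − √(1−p)| ≤ √(T/S) ≤ √p + √(1−p) ≤ 1/√S. -/

import Mathlib

open scoped InnerProductSpace

/-- A quantum-mechanical model of a dichotomic projective measurement with postselection,
realizing outcome probability `p`, transition probability `T`, and success probability `S`. -/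
structure DichotomicModel (p T S : ℝ) where
  H : Type
  [normed : NormedAddCommGroup H]
  [inner_ : InnerProductSpace ℂ H]
  [findim : FiniteDimensional ℂ H]
  ψ : H
  φ : H
  Pr₁ : H →ₗ[ℂ] H
  Pr₂ : H →ₗ[ℂ] H
  norm_ψ : ‖ψ‖ = 1
  norm_φ : ‖φ‖ = 1
  sa₁ : Pr₁.IsSymmetric
  sa₂ : Pr₂.IsSymmetric
  idem₁ : Pr₁ ∘ₗ Pr₁ = Pr₁
  idem₂ : Pr₂ ∘ₗ Pr₂ = Pr₂
  sum_eq : Pr₁ + Pr₂ = LinearMap.id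
  hT : ‖⟪φ, ψ⟫_ℂ‖ ^ 2 = T
  hS : ‖⟪φ, Pr₁ ψ⟫_ℂ‖ ^ 2 + ‖⟪φ, Pr₂ ψ⟫_ℂ‖ ^ 2 = S
  hp : ‖⟪φ, Pr₁ ψ⟫_ℂ‖ ^ 2 = p * S

set_option maxHeartbeats 1000000

lemma stmt16_aux (p T S : ℝ) (hp0 : 0 ≤ p) (hp1 : p ≤ 1) (hT0 : 0 ≤ T)
    (hS0 : 0 < S) (hS1 : S ≤ 1)
    (h1 : |Real.sqrt p - Real.sqrt (1-p)| ≤ Real.sqrt (T/S))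
    (h2 : Real.sqrt (T/S) ≤ Real.sqrt p + Real.sqrt (1-p))
    (h3 : Real.sqrt p + Real.sqrt (1-p) ≤ 1 / Real.sqrt S) :
    ∃ x₁ x₂ y₁ y₂ c : ℝ, 0 ≤ x₁ ∧ 0 ≤ x₂ ∧ 0 ≤ y₁ ∧ 0 ≤ y₂ ∧ c^2 ≤ 1 ∧
      x₁^2 + x₂^2 = 1 ∧ y₁^2 + y₂^2 = 1 ∧
      (x₁*y₁)^2 = p*S ∧ (x₂*y₂)^2 = (1-p)*S ∧
      (x₁*y₁)^2 + (x₂*y₂)^2 + 2*(x₁*y₁)*(x₂*y₂)*c = T := by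
  have hSs : (0:ℝ) < Real.sqrt S := Real.sqrt_pos.mpr hS0
  set u := Real.sqrt (p*S) with hu_def
  set v := Real.sqrt ((1-p)*S) with hv_def
  have hu0 : 0 ≤ u := Real.sqrt_nonneg _
  have hv0 : 0 ≤ v := Real.sqrt_nonneg _
  have hu2 : u^2 = p*S := Real.sq_sqrt (by positivity)
  have hv2 : v^2 = (1-p)*S := Real.sq_sqrt (by nlinarith)
  have hum : u = Real.sqrt p * Real.sqrt S := Real.sqrt_mul hp0 S
  have hvm : v = Real.sqrt (1-p) * Real.sqrt S := Real.sqrt_mul (by linarith) S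
  have hTq : Real.sqrt (T/S) = Real.sqrt T / Real.sqrt S := Real.sqrt_div hT0 S
  -- u + v ≤ 1
  have huv1 : u + v ≤ 1 := by
    rw [le_div_iff₀ hSs] at h3
    rw [hum, hvm]; nlinarith
  -- T ≤ (u+v)^2
  have hTub : T ≤ (u+v)^2 := by
    rw [hTq, div_le_iff₀ hSs] at h2
    have : Real.sqrt T ≤ u + v := by rw [hum, hvm]; nlinarith
    calc T = Real.sqrt T ^ 2 := (Real.sq_sqrt hT0).symm
      _ ≤ (u+v)^2 := pow_le_pow_left₀ (Real.sqrt_nonneg T) this 2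
  -- (u-v)^2 ≤ T
  have hTlb : (u-v)^2 ≤ T := by
    rw [hTq, le_div_iff₀ hSs] at h1
    have h1' : |u - v| ≤ Real.sqrt T := by
      have : |Real.sqrt p - Real.sqrt (1-p)| * Real.sqrt S
          = |(Real.sqrt p - Real.sqrt (1-p)) * Real.sqrt S| := by
        rw [abs_mul, abs_of_nonneg hSs.le]
      rw [this] at h1
      rw [hum, hvm]
      calc |Real.sqrt p * Real.sqrt S - Real.sqrt (1-p) * Real.sqrt S|
          = |(Real.sqrt p - Real.sqrt (1-p)) * Real.sqrt S| := by ring_nf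
        _ ≤ Real.sqrt T := h1
    calc (u-v)^2 = |u-v|^2 := (sq_abs _).symm
      _ ≤ Real.sqrt T ^ 2 := pow_le_pow_left₀ (abs_nonneg _) h1' 2
      _ = T := Real.sq_sqrt hT0
  have hv1 : v ≤ 1 := by nlinarith
  have hu1 : u ≤ 1 := by nlinarith
  set s := 1 + u^2 - v^2 with hs_def
  have hs0 : 0 ≤ s := by nlinarith
  have hs2 : s ≤ 2 := by nlinarith
  set D := s^2 - 4*u^2 with hD_def
  have hD0 : 0 ≤ D := by
    have f1 : 0 ≤ 1-u-v := by linarith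
    have f2 : 0 ≤ 1-u+v := by linarith
    have f3 : 0 ≤ 1+u-v := by linarith
    have f4 : 0 ≤ 1+u+v := by linarith
    nlinarith [mul_nonneg (mul_nonneg (mul_nonneg f1 f2) f3) f4]
  have hDs : Real.sqrt D ≤ s := by
    have hle : D ≤ s^2 := by nlinarith [sq_nonneg u]
    have : Real.sqrt D ≤ Real.sqrt (s^2) := Real.sqrt_le_sqrt hle
    rwa [Real.sqrt_sq hs0] at this
  have hDs' : Real.sqrt D ≤ 2 - s := by
    have h2s : 0 ≤ 2 - s := by linarith
    have hle : D ≤ (2-s)^2 := by nlinarith [sq_nonneg v]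
    have : Real.sqrt D ≤ Real.sqrt ((2-s)^2) := Real.sqrt_le_sqrt hle
    rwa [Real.sqrt_sq h2s] at this
  have hDsq : Real.sqrt D ^ 2 = D := Real.sq_sqrt hD0
  have hDnn : 0 ≤ Real.sqrt D := Real.sqrt_nonneg _
  set X := (s + Real.sqrt D)/2 with hX_def
  set Y := (s - Real.sqrt D)/2 with hY_def
  have hX0 : 0 ≤ X := by positivity
  have hY0 : 0 ≤ Y := by simp only [hY_def]; linarith
  have hX1 : X ≤ 1 := by simp only [hX_def]; linarith
  have hY1 : Y ≤ 1 := by simp only [hY_def]; nlinarith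
  have hXY : X * Y = u^2 := by
    simp only [hX_def, hY_def]; field_simp; nlinarith
  have hXY' : (1-X) * (1-Y) = v^2 := by
    simp only [hX_def, hY_def]; field_simp; nlinarith
  clear hX_def hY_def
  clear_value X Y
  clear hDs hDs' hDsq hDnn hD0 hD_def hs0 hs2 hs_def hum hvm hTq h1 h2 h3
  clear_value u v s D
  have hsqX : Real.sqrt X ^ 2 = X := Real.sq_sqrt hX0
  have hsqX' : Real.sqrt (1-X) ^ 2 = 1-X := Real.sq_sqrt (by linarith)
  have hsqY : Real.sqrt Y ^ 2 = Y := Real.sq_sqrt hY0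
  have hsqY' : Real.sqrt (1-Y) ^ 2 = 1-Y := Real.sq_sqrt (by linarith)
  have hxy : Real.sqrt X * Real.sqrt Y = u := by
    rw [← Real.sqrt_mul hX0, hXY, Real.sqrt_sq hu0]
  have hxy' : Real.sqrt (1-X) * Real.sqrt (1-Y) = v := by
    rw [← Real.sqrt_mul (by linarith : (0:ℝ) ≤ 1-X), hXY', Real.sqrt_sq hv0]
  have e3 : (u+v)^2 = u^2 + 2*(u*v) + v^2 := by ring
  have e4 : (u-v)^2 = u^2 - 2*(u*v) + v^2 := by ring
  by_cases hc : u * v = 0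
  · have hTeq : T = u^2 + v^2 := by
      rw [e3, hc] at hTub; rw [e4, hc] at hTlb; linarith
    refine ⟨Real.sqrt X, Real.sqrt (1-X), Real.sqrt Y, Real.sqrt (1-Y), 0,
      Real.sqrt_nonneg _, Real.sqrt_nonneg _, Real.sqrt_nonneg _, Real.sqrt_nonneg _,
      by norm_num, by rw [hsqX, hsqX']; ring, by rw [hsqY, hsqY']; ring, ?_, ?_, ?_⟩
    · rw [hxy, hu2]
    · rw [hxy', hv2]
    · rw [hxy, hxy', hTeq]; ring
  · have huv : 0 < u*v := lt_of_le_of_ne (mul_nonneg hu0 hv0) (Ne.symm hc)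
    have b1 : T - u^2 - v^2 ≤ 2*(u*v) := by rw [e3] at hTub; linarith
    have b2 : -(2*(u*v)) ≤ T - u^2 - v^2 := by rw [e4] at hTlb; linarith
    refine ⟨Real.sqrt X, Real.sqrt (1-X), Real.sqrt Y, Real.sqrt (1-Y),
      (T - u^2 - v^2)/(2*(u*v)),
      Real.sqrt_nonneg _, Real.sqrt_nonneg _, Real.sqrt_nonneg _, Real.sqrt_nonneg _,
      ?_, by rw [hsqX, hsqX']; ring, by rw [hsqY, hsqY']; ring, ?_, ?_, ?_⟩
    · rw [div_pow, div_le_one (pow_pos (by linarith) 2)]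
      nlinarith [mul_nonneg (by linarith : (0:ℝ) ≤ 2*(u*v) - (T - u^2 - v^2))
        (by linarith : (0:ℝ) ≤ 2*(u*v) + (T - u^2 - v^2))]
    · rw [hxy, hu2]
    · rw [hxy', hv2]
    · rw [hxy, hxy']
      have hne : 2*(u*v) ≠ 0 := ne_of_gt (by linarith)
      have h2 : 2*(u*v)*((T - u^2 - v^2)/(2*(u*v))) = T - u^2 - v^2 := by
        rw [mul_comm]; exact div_mul_cancel₀ _ hne
      linear_combination h2


noncomputable def Pk16 (k : Fin 2) : EuclideanSpace ℂ (Fin 2) →ₗ[ℂ] EuclideanSpace ℂ (Fin 2) where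
  toFun f := WithLp.toLp 2 (fun i => if i = k then f i else 0)
  map_add' x y := by ext i; by_cases h : i = k <;> simp [h]
  map_smul' c x := by ext i; by_cases h : i = k <;> simp [h]

lemma Pk16_sym (k : Fin 2) : (Pk16 k).IsSymmetric := by
  intro x y
  simp only [Pk16, LinearMap.coe_mk, AddHom.coe_mk, PiLp.inner_apply, Fin.sum_univ_two]
  fin_cases k <;> simp

lemma Pk16_idem (k : Fin 2) : (Pk16 k) ∘ₗ (Pk16 k) = Pk16 k := by
  refine LinearMap.ext fun f => ?_
  ext i
  by_cases h : i = k <;> simp [Pk16, h]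

lemma Pk16_sum : Pk16 0 + Pk16 1 = LinearMap.id := by
  refine LinearMap.ext fun f => ?_
  ext i
  fin_cases i <;> simp [Pk16]


theorem stmt_16 (p T S : ℝ) (hp0 : 0 ≤ p) (hp1 : p ≤ 1) (hT0 : 0 ≤ T) (hT1 : T ≤ 1)
    (hS0 : 0 < S) (hS1 : S ≤ 1) :
    Nonempty (DichotomicModel p T S) ↔
      (|Real.sqrt p - Real.sqrt (1 - p)| ≤ Real.sqrt (T / S) ∧
       Real.sqrt (T / S) ≤ Real.sqrt p + Real.sqrt (1 - p) ∧
       Real.sqrt p + Real.sqrt (1 - p) ≤ 1 / Real.sqrt S) := by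
  have hSs : (0:ℝ) < Real.sqrt S := Real.sqrt_pos.mpr hS0
  have hTq : Real.sqrt (T/S) = Real.sqrt T / Real.sqrt S := Real.sqrt_div hT0 S
  constructor
  · rintro ⟨M⟩
    letI := M.normed; letI := M.inner_; letI := M.findim
    have hPsum : ∀ x : M.H, M.Pr₁ x + M.Pr₂ x = x := by
      intro x
      have := congrArg (fun L : M.H →ₗ[ℂ] M.H => L x) M.sum_eq
      simpa using this
    set a := ⟪M.φ, M.Pr₁ M.ψ⟫_ℂ with ha_def
    set b := ⟪M.φ, M.Pr₂ M.ψ⟫_ℂ with hb_def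
    have hab : a + b = ⟪M.φ, M.ψ⟫_ℂ := by
      rw [ha_def, hb_def, ← inner_add_right, hPsum]
    have key : ∀ (P : M.H →ₗ[ℂ] M.H), P.IsSymmetric → P ∘ₗ P = P →
        ‖⟪M.φ, P M.ψ⟫_ℂ‖ ≤ ‖P M.φ‖ * ‖P M.ψ‖ := by
      intro P hsym hidem
      have e : ⟪M.φ, P M.ψ⟫_ℂ = ⟪P M.φ, P M.ψ⟫_ℂ := by
        conv_lhs => rw [show P M.ψ = P (P M.ψ) by rw [← LinearMap.comp_apply, hidem]]
        exact (hsym M.φ (P M.ψ)).symm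
      rw [e]
      exact norm_inner_le_norm _ _
    have keyn : ∀ x : M.H, ‖x‖ = 1 → ‖M.Pr₁ x‖^2 + ‖M.Pr₂ x‖^2 = 1 := by
      intro x hx
      have e1 : (‖M.Pr₁ x‖:ℝ)^2 = (⟪x, M.Pr₁ x⟫_ℂ).re := by
        have h : (⟪M.Pr₁ x, M.Pr₁ x⟫_ℂ).re = ‖M.Pr₁ x‖^2 :=
          @inner_self_eq_norm_sq ℂ _ _ _ _ (M.Pr₁ x)
        rw [← h]
        congr 1
        calc ⟪M.Pr₁ x, M.Pr₁ x⟫_ℂ = ⟪x, M.Pr₁ (M.Pr₁ x)⟫_ℂ := M.sa₁ x (M.Pr₁ x)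
          _ = ⟪x, M.Pr₁ x⟫_ℂ := by rw [← LinearMap.comp_apply, M.idem₁]
      have e2 : (‖M.Pr₂ x‖:ℝ)^2 = (⟪x, M.Pr₂ x⟫_ℂ).re := by
        have h : (⟪M.Pr₂ x, M.Pr₂ x⟫_ℂ).re = ‖M.Pr₂ x‖^2 :=
          @inner_self_eq_norm_sq ℂ _ _ _ _ (M.Pr₂ x)
        rw [← h]
        congr 1
        calc ⟪M.Pr₂ x, M.Pr₂ x⟫_ℂ = ⟪x, M.Pr₂ (M.Pr₂ x)⟫_ℂ := M.sa₂ x (M.Pr₂ x)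
          _ = ⟪x, M.Pr₂ x⟫_ℂ := by rw [← LinearMap.comp_apply, M.idem₂]
      have e3 : ⟪x, M.Pr₁ x⟫_ℂ + ⟪x, M.Pr₂ x⟫_ℂ = ⟪x, x⟫_ℂ := by
        rw [← inner_add_right, hPsum]
      have e4 : (⟪x, x⟫_ℂ).re = 1 := by
        have h : (⟪x, x⟫_ℂ).re = ‖x‖^2 := @inner_self_eq_norm_sq ℂ _ _ _ _ x
        rw [h, hx]; norm_num
      rw [e1, e2, ← Complex.add_re, e3, e4]
    have hA2 : ‖a‖ ^ 2 = p * S := M.hp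
    have hB2 : ‖b‖ ^ 2 = (1-p) * S := by
      have := M.hS
      rw [← ha_def, ← hb_def] at this
      nlinarith [this, hA2]
    have hAB1 : ‖a‖ + ‖b‖ ≤ 1 := by
      have k1 := key M.Pr₁ M.sa₁ M.idem₁
      have k2 := key M.Pr₂ M.sa₂ M.idem₂
      have n1 := keyn M.ψ M.norm_ψ
      have n2 := keyn M.φ M.norm_φ
      rw [← ha_def] at k1
      rw [← hb_def] at k2
      nlinarith [k1, k2, n1, n2,
        sq_nonneg (‖M.Pr₁ M.φ‖ - ‖M.Pr₁ M.ψ‖), sq_nonneg (‖M.Pr₂ M.φ‖ - ‖M.Pr₂ M.ψ‖)]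
    have htri1 : ‖a+b‖ ≤ ‖a‖ + ‖b‖ :=
      norm_add_le a b
    have htri2 : ‖a‖ ≤ ‖a+b‖ + ‖b‖ := by
      calc ‖a‖ = ‖(a+b) + (-b)‖ := by ring_nf
        _ ≤ ‖a+b‖ + ‖-b‖ := norm_add_le _ _
        _ = ‖a+b‖ + ‖b‖ := by rw [norm_neg]
    have htri3 : ‖b‖ ≤ ‖a+b‖ + ‖a‖ := by
      calc ‖b‖ = ‖(a+b) + (-a)‖ := by ring_nf
        _ ≤ ‖a+b‖ + ‖-a‖ := norm_add_le _ _
        _ = ‖a+b‖ + ‖a‖ := by rw [norm_neg]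
    have habT : ‖a+b‖ = Real.sqrt T := by
      have h := M.hT
      rw [← hab] at h
      rw [← h, Real.sqrt_sq (norm_nonneg _)]
    have hAe : ‖a‖ = Real.sqrt p * Real.sqrt S := by
      rw [← Real.sqrt_sq (norm_nonneg a), hA2, Real.sqrt_mul hp0]
    have hBe : ‖b‖ = Real.sqrt (1-p) * Real.sqrt S := by
      rw [← Real.sqrt_sq (norm_nonneg b), hB2,
        Real.sqrt_mul (by linarith : (0:ℝ) ≤ 1-p)]
    refine ⟨?_, ?_, ?_⟩
    · rw [hTq, le_div_iff₀ hSs, ← habT]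
      have e : |Real.sqrt p - Real.sqrt (1-p)| * Real.sqrt S
          = |‖a‖ - ‖b‖| := by
        rw [hAe, hBe,
          show Real.sqrt p * Real.sqrt S - Real.sqrt (1-p) * Real.sqrt S
            = (Real.sqrt p - Real.sqrt (1-p)) * Real.sqrt S from by ring,
          abs_mul, abs_of_nonneg hSs.le]
      rw [e, abs_sub_le_iff]
      constructor <;> linarith
    · rw [hTq, div_le_iff₀ hSs, ← habT]
      have e : (Real.sqrt p + Real.sqrt (1-p)) * Real.sqrt S
          = ‖a‖ + ‖b‖ := by rw [hAe, hBe]; ring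
      rw [e]
      exact htri1
    · rw [le_div_iff₀ hSs]
      have e : (Real.sqrt p + Real.sqrt (1-p)) * Real.sqrt S
          = ‖a‖ + ‖b‖ := by rw [hAe, hBe]; ring
      rw [e]
      exact hAB1
  · rintro ⟨h1, h2, h3⟩
    obtain ⟨x₁, x₂, y₁, y₂, c, hx₁, hx₂, hy₁, hy₂, hc, hxs, hys, hP, hQ, hTt⟩ :=
      stmt16_aux p T S hp0 hp1 hT0 hS0 hS1 h1 h2 h3
    have hc' : (0:ℝ) ≤ 1 - c^2 := by linarith
    have h1c : Real.sqrt (1-c^2) ^ 2 = 1 - c^2 := Real.sq_sqrt hc'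
    set z : ℂ := ⟨c, Real.sqrt (1-c^2)⟩ with hz_def
    have hzsq : Complex.normSq z = 1 := by
      simp only [hz_def, Complex.normSq_mk]
      nlinarith [h1c]
    have hza : ‖z‖ = 1 := by
      rw [Complex.norm_def, hzsq, Real.sqrt_one]
    have hzn : ‖z‖ = 1 := by rw [hza]
    set ψ : EuclideanSpace ℂ (Fin 2) :=
      WithLp.toLp 2 (fun i : Fin 2 => if i = 0 then (x₁:ℂ) else (x₂:ℂ)*z) with hψ_def
    set φ : EuclideanSpace ℂ (Fin 2) :=
      WithLp.toLp 2 (fun i : Fin 2 => if i = 0 then (y₁:ℂ) else (y₂:ℂ)) with hφ_def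
    refine ⟨⟨EuclideanSpace ℂ (Fin 2), ψ, φ, Pk16 0, Pk16 1, ?_, ?_,
      Pk16_sym 0, Pk16_sym 1, Pk16_idem 0, Pk16_idem 1, Pk16_sum, ?_, ?_, ?_⟩⟩
    · rw [EuclideanSpace.norm_eq]
      simp [hψ_def, Fin.sum_univ_two, norm_mul, hzn, Complex.norm_real,
        abs_of_nonneg hx₁, abs_of_nonneg hx₂, hza]
      linarith [hxs]
    · rw [EuclideanSpace.norm_eq]
      simp [hφ_def, Fin.sum_univ_two, Complex.norm_real,
        abs_of_nonneg hy₁, abs_of_nonneg hy₂]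
      exact hys
    · have hinner : ⟪φ, ψ⟫_ℂ = ((x₁*y₁ : ℝ):ℂ) + ((x₂*y₂:ℝ):ℂ) * z := by
        simp [PiLp.inner_apply, Fin.sum_univ_two, hψ_def, hφ_def]
        push_cast
        ring
      rw [hinner, Complex.sq_norm, Complex.normSq_apply]
      simp only [Complex.add_re, Complex.add_im, Complex.mul_re, Complex.mul_im,
        hz_def, Complex.ofReal_re, Complex.ofReal_im]
      ring_nf
      linear_combination hTt + (x₂*y₂)^2 * h1c
    · have hi1 : ⟪φ, (Pk16 0) ψ⟫_ℂ = ((x₁*y₁:ℝ):ℂ) := by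
        simp [Pk16, PiLp.inner_apply, Fin.sum_univ_two, hψ_def, hφ_def]
      have hi2 : ⟪φ, (Pk16 1) ψ⟫_ℂ = ((x₂*y₂:ℝ):ℂ) * z := by
        simp [Pk16, PiLp.inner_apply, Fin.sum_univ_two, hψ_def, hφ_def]
        push_cast
        ring
      rw [hi1, hi2, norm_mul, Complex.norm_real, Complex.norm_real, hza, mul_one,
        Real.norm_eq_abs, Real.norm_eq_abs, sq_abs, sq_abs]
      linarith [hP, hQ]
    · have hi1 : ⟪φ, (Pk16 0) ψ⟫_ℂ = ((x₁*y₁:ℝ):ℂ) := by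
        simp [Pk16, PiLp.inner_apply, Fin.sum_univ_two, hψ_def, hφ_def]
      rw [hi1, Complex.norm_real, Real.norm_eq_abs, sq_abs]
      exact hP
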